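/- arXiv:2405.19541 — 7 statements merged into one kernel-verified Lean document; each statement's English description precedes it below -/
import Mathlib

section
/- For any Boolean function f : {0,1}^n → {0,1} that is non-decreasing, the expected number of pivotal coordinates equals E(S_n f), where S_n = X_1 + ⋯ + X_n with X_i(ω) = ω(i)/p − (1−ω(i))/(1−p). -/
open Finset Real

/-- The Bernoulli(p) product weight of a configuration `ω ∈ {0,1}^n`. -/
def W (n : ℕ) (p : ℝ) (ω : Fin n → Bool) : ℝ :=
  ∏ i, if ω i then p else 1 - p

/-- Expectation of `g` under the Bernoulli(p) product measure on `{0,1}^n`. -/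
def Ex (n : ℕ) (p : ℝ) (g : (Fin n → Bool) → ℝ) : ℝ :=
  ∑ ω : Fin n → Bool, g ω * W n p ω

/-- `ω` with its `i`-th coordinate set to `1`. -/
def up1 {n : ℕ} (ω : Fin n → Bool) (i : Fin n) : Fin n → Bool :=
  Function.update ω i true

/-- `ω` with its `i`-th coordinate set to `0`. -/
def up0 {n : ℕ} (ω : Fin n → Bool) (i : Fin n) : Fin n → Bool :=
  Function.update ω i false

/-- The random variable `X i (ω) = ω(i)/p − (1−ω(i))/(1−p)`. -/
noncomputable def X (n : ℕ) (p : ℝ) (i : Fin n) (ω : Fin n → Bool) : ℝ :=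
  (if ω i then (1:ℝ) else 0) / p - (1 - if ω i then (1:ℝ) else 0) / (1 - p)

/-- `S_n = X_1 + ⋯ + X_n`. -/
noncomputable def Sn (n : ℕ) (p : ℝ) (ω : Fin n → Bool) : ℝ :=
  ∑ i, X n p i ω

/-- The set of pivotal coordinates of `f` at `ω`. -/
def pivSet {n : ℕ} (f : (Fin n → Bool) → Bool) (ω : Fin n → Bool) : Finset (Fin n) :=
  Finset.univ.filter fun i => f (up1 ω i) ≠ f (up0 ω i)

/-- The real value of a Boolean function. -/
def fval {n : ℕ} (f : (Fin n → Bool) → Bool) (ω : Fin n → Bool) : ℝ :=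
  if f ω then 1 else 0

/-- Probability of an event under the Bernoulli(p) product measure. -/
def Pr (n : ℕ) (p : ℝ) (A : (Fin n → Bool) → Prop) [DecidablePred A] : ℝ :=
  ∑ ω ∈ Finset.univ.filter A, W n p ω

/-- `f` is non-decreasing. -/
def Mono {n : ℕ} (f : (Fin n → Bool) → Bool) : Prop :=
  ∀ (ω : Fin n → Bool) (i : Fin n), f (up0 ω i) ≤ f (up1 ω i)

lemma flip_invol {n : ℕ} (i : Fin n) :
    Function.Involutive (fun ω : Fin n → Bool => Function.update ω i (!ω i)) := by
  intro ω
  simp [Function.update_idem]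

lemma W_split (n : ℕ) (p : ℝ) (ω : Fin n → Bool) (i : Fin n) :
    W n p ω = (if ω i then p else 1 - p) *
      ∏ j ∈ Finset.univ.erase i, (if ω j then p else 1 - p) := by
  rw [W, ← Finset.mul_prod_erase Finset.univ _ (Finset.mem_univ i)]

lemma pointwise (n : ℕ) (p : ℝ) (hp0 : 0 < p) (hp1 : p < 1)
    (f : (Fin n → Bool) → Bool) (i : Fin n) (ω : Fin n → Bool) :
    ((fval f (up1 ω i) - fval f (up0 ω i)) * W n p ω - X n p i ω * fval f ω * W n p ω)
    + ((fval f (up1 (Function.update ω i (!ω i)) i) - fval f (up0 (Function.update ω i (!ω i)) i))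
        * W n p (Function.update ω i (!ω i))
       - X n p i (Function.update ω i (!ω i)) * fval f (Function.update ω i (!ω i))
        * W n p (Function.update ω i (!ω i))) = 0 := by
  set σ := Function.update ω i (!ω i) with hσ
  have hup1 : up1 σ i = up1 ω i := by simp [up1, hσ, Function.update_idem]
  have hup0 : up0 σ i = up0 ω i := by simp [up0, hσ, Function.update_idem]
  have hR : (∏ j ∈ Finset.univ.erase i, (if σ j then p else 1 - p))
      = ∏ j ∈ Finset.univ.erase i, (if ω j then p else 1 - p) := by
    apply Finset.prod_congr rfl
    intro j hj
    rw [hσ, Function.update_of_ne (Finset.ne_of_mem_erase hj)]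
  set R := ∏ j ∈ Finset.univ.erase i, (if ω j then p else 1 - p) with hRdef
  have hσi : σ i = !ω i := by rw [hσ]; simp
  have hp0' : p ≠ 0 := ne_of_gt hp0
  have hp1' : (1:ℝ) - p ≠ 0 := by intro h; linarith [hp1]
  cases hω : ω i
  · -- ω i = false : ω = up0 ω i, σ = up1 ω i
    have hωe : up0 ω i = ω := by rw [up0, ← hω, Function.update_eq_self]
    have hσe : σ = up1 ω i := by simp [hσ, up1, hω]
    have hXω : X n p i ω = -(1 / (1 - p)) := by simp [X, hω]
    have hXσ : X n p i σ = 1 / p := by simp [X, hσi, hω]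
    rw [W_split n p ω i, W_split n p σ i, hR, ← hRdef, hσi, hω, hup1, hup0,
        hXω, hXσ, hσe, hωe]
    simp only [Bool.not_false, Bool.false_eq_true, if_true, if_false]
    field_simp
    ring
  · -- ω i = true : ω = up1 ω i, σ = up0 ω i
    have hωe : up1 ω i = ω := by rw [up1, ← hω, Function.update_eq_self]
    have hσe : σ = up0 ω i := by simp [hσ, up0, hω]
    have hXω : X n p i ω = 1 / p := by simp [X, hω]
    have hXσ : X n p i σ = -(1 / (1 - p)) := by simp [X, hσi, hω]
    rw [W_split n p ω i, W_split n p σ i, hR, ← hRdef, hσi, hω, hup1, hup0,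
        hXω, hXσ, hσe, hωe]
    simp only [Bool.not_true, Bool.false_eq_true, if_true, if_false]
    field_simp
    ring

lemma key (n : ℕ) (p : ℝ) (hp0 : 0 < p) (hp1 : p < 1)
    (f : (Fin n → Bool) → Bool) (i : Fin n) :
    ∑ ω : Fin n → Bool, (fval f (up1 ω i) - fval f (up0 ω i)) * W n p ω
      = ∑ ω : Fin n → Bool, X n p i ω * fval f ω * W n p ω := by
  set D : (Fin n → Bool) → ℝ := fun ω =>
    (fval f (up1 ω i) - fval f (up0 ω i)) * W n p ω - X n p i ω * fval f ω * W n p ω with hD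
  have hsum : ∑ ω : Fin n → Bool, D ω = 0 := by
    have h1 : ∑ ω : Fin n → Bool, D ω
        = ∑ ω : Fin n → Bool, D (Function.update ω i (!ω i)) :=
      (Fintype.sum_equiv (flip_invol (n := n) i).toPerm _ _ (fun ω => rfl)).symm
    have h2 : (2:ℝ) * ∑ ω : Fin n → Bool, D ω = 0 := by
      rw [two_mul]
      nth_rewrite 2 [h1]
      rw [← Finset.sum_add_distrib]
      rw [Finset.sum_eq_zero]
      intro ω _
      exact pointwise n p hp0 hp1 f i ω
    linarith
  have := Finset.sum_sub_distrib (s := (Finset.univ : Finset (Fin n → Bool)))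
    (f := fun ω => (fval f (up1 ω i) - fval f (up0 ω i)) * W n p ω)
    (g := fun ω => X n p i ω * fval f ω * W n p ω)
  rw [← sub_eq_zero, ← this]
  exact hsum

lemma card_piv {n : ℕ} (f : (Fin n → Bool) → Bool) (hf : Mono f) (ω : Fin n → Bool) :
    ((pivSet f ω).card : ℝ) = ∑ i, (fval f (up1 ω i) - fval f (up0 ω i)) := by
  rw [pivSet, Finset.card_filter]
  push_cast
  apply Finset.sum_congr rfl
  intro i _
  have h := hf ω i
  cases h1 : f (up1 ω i) <;> cases h0 : f (up0 ω i) <;>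
    simp_all [fval, Bool.le_iff_imp]

theorem stmt3 (n : ℕ) (p : ℝ) (hp0 : 0 < p) (hp1 : p < 1)
    (f : (Fin n → Bool) → Bool) (hf : Mono f) :
    Ex n p (fun ω => ((pivSet f ω).card : ℝ)) =
      Ex n p (fun ω => Sn n p ω * fval f ω) := by
  unfold Ex
  calc ∑ ω : Fin n → Bool, ((pivSet f ω).card : ℝ) * W n p ω
      = ∑ ω : Fin n → Bool, ∑ i, (fval f (up1 ω i) - fval f (up0 ω i)) * W n p ω :=
        Finset.sum_congr rfl fun ω _ => by rw [card_piv f hf ω, Finset.sum_mul]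
    _ = ∑ i, ∑ ω : Fin n → Bool, (fval f (up1 ω i) - fval f (up0 ω i)) * W n p ω :=
        Finset.sum_comm
    _ = ∑ i, ∑ ω : Fin n → Bool, X n p i ω * fval f ω * W n p ω :=
        Finset.sum_congr rfl fun i _ => key n p hp0 hp1 f i
    _ = ∑ ω : Fin n → Bool, ∑ i, X n p i ω * fval f ω * W n p ω := Finset.sum_comm
    _ = ∑ ω : Fin n → Bool, Sn n p ω * fval f ω * W n p ω :=
        Finset.sum_congr rfl fun ω _ => by rw [Sn, Finset.sum_mul, Finset.sum_mul]
end

section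
/- For any non-decreasing Boolean function f : {0,1}^n → {0,1}, the derivative with respect to p of the expectation E_p(f) under the Bernoulli(p) product measure equals the expected size of the pivotal set: d/dp E_p(f) = E_p(|P(f)|) (Margulis–Russo formula). -/
open Finset Real

namespace Russo

variable {n : ℕ}

/-- flip the i-th coordinate -/
def flip (ω : Fin n → Bool) (i : Fin n) : Fin n → Bool :=
  Function.update ω i (!(ω i))

lemma flip_flip (ω : Fin n → Bool) (i : Fin n) : flip (flip ω i) i = ω := by
  funext j
  by_cases hj : j = i
  · subst hj; simp [flip]
  · simp [flip, Function.update_of_ne hj]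

lemma flip_ne (ω : Fin n → Bool) (i : Fin n) : flip ω i ≠ ω := by
  intro h
  have := congrFun h i
  simp [flip] at this

lemma flip_apply_self (ω : Fin n → Bool) (i : Fin n) : flip ω i i = !(ω i) := by
  simp [flip]

lemma flip_apply_ne (ω : Fin n → Bool) (i j : Fin n) (h : j ≠ i) : flip ω i j = ω j := by
  simp [flip, Function.update_of_ne h]

lemma up1_flip (ω : Fin n → Bool) (i : Fin n) : up1 (flip ω i) i = up1 ω i := by
  funext j
  by_cases hj : j = i
  · subst hj; simp [up1]
  · simp [up1, flip, Function.update_of_ne hj]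

lemma up0_flip (ω : Fin n → Bool) (i : Fin n) : up0 (flip ω i) i = up0 ω i := by
  funext j
  by_cases hj : j = i
  · subst hj; simp [up0]
  · simp [up0, flip, Function.update_of_ne hj]

lemma prod_erase_flip (p : ℝ) (ω : Fin n → Bool) (i : Fin n) :
    (∏ j ∈ Finset.univ.erase i, (if flip ω i j then p else 1 - p))
      = ∏ j ∈ Finset.univ.erase i, (if ω j then p else 1 - p) := by
  refine Finset.prod_congr rfl fun j hj => ?_
  rw [flip_apply_ne ω i j (Finset.ne_of_mem_erase hj)]

lemma up1_self {ω : Fin n → Bool} {i : Fin n} (h : ω i = true) : up1 ω i = ω := by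
  funext j
  by_cases hj : j = i
  · subst hj; simp [up1, h]
  · simp [up1, Function.update_of_ne hj]

lemma up0_self {ω : Fin n → Bool} {i : Fin n} (h : ω i = false) : up0 ω i = ω := by
  funext j
  by_cases hj : j = i
  · subst hj; simp [up0, h]
  · simp [up0, Function.update_of_ne hj]

/-- the "derivative term" at coordinate i -/
noncomputable def dterm (f : (Fin n → Bool) → Bool) (p : ℝ) (i : Fin n)
    (ω : Fin n → Bool) : ℝ :=
  fval f ω * ((∏ j ∈ Finset.univ.erase i, (if ω j then p else 1 - p)) *
    (if ω i then (1:ℝ) else -1))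

lemma key_i (f : (Fin n → Bool) → Bool) (p : ℝ) (i : Fin n) :
    ∑ ω : Fin n → Bool, dterm f p i ω
      = ∑ ω : Fin n → Bool, (fval f (up1 ω i) - fval f (up0 ω i)) * W n p ω := by
  have hzero : ∑ ω : Fin n → Bool,
      (dterm f p i ω - (fval f (up1 ω i) - fval f (up0 ω i)) * W n p ω) = 0 := by
    have hpt : ∀ ω : Fin n → Bool,
        dterm f p i ω - (fval f (up1 ω i) - fval f (up0 ω i)) * W n p ω
        = (if ω i then (1:ℝ) else -1) *
            (((1 - p) * fval f (up1 ω i) + p * fval f (up0 ω i)) *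
              ∏ j ∈ Finset.univ.erase i, (if ω j then p else 1 - p)) := by
      intro ω
      have hW : W n p ω = (if ω i then p else 1 - p) *
          ∏ j ∈ Finset.univ.erase i, (if ω j then p else 1 - p) := by
        rw [W, ← Finset.mul_prod_erase Finset.univ _ (Finset.mem_univ i)]
      rw [hW, dterm]
      cases h : ω i with
      | true =>
        rw [show fval f ω = fval f (up1 ω i) by rw [up1_self h]]
        simp only [h, if_true]
        ring
      | false =>
        rw [show fval f ω = fval f (up0 ω i) by rw [up0_self h]]
        simp [h]
        ring
    refine Finset.sum_ninvolution (fun ω => flip ω i) ?_ ?_ (fun _ => Finset.mem_univ _)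
      (fun ω => flip_flip ω i)
    · intro ω
      rw [hpt, hpt]
      simp only [up1_flip, up0_flip, prod_erase_flip, flip_apply_self]
      cases h : ω i <;> simp [h] <;> ring
    · intro ω _
      exact flip_ne ω i
  have := Finset.sum_sub_distrib (s := (Finset.univ : Finset (Fin n → Bool)))
    (f := fun ω => dterm f p i ω)
    (g := fun ω => (fval f (up1 ω i) - fval f (up0 ω i)) * W n p ω)
  rw [hzero] at this
  linarith [this]

lemma sum_D_eq_card (f : (Fin n → Bool) → Bool) (hf : Mono f) (ω : Fin n → Bool) :
    ∑ i : Fin n, (fval f (up1 ω i) - fval f (up0 ω i)) = ((pivSet f ω).card : ℝ) := by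
  rw [pivSet, Finset.card_filter, Nat.cast_sum]
  refine Finset.sum_congr rfl fun i _ => ?_
  have h := hf ω i
  cases h1' : f (up1 ω i) <;> cases h0' : f (up0 ω i) <;>
    rw [h1', h0'] at h <;> first
      | exact absurd h (by decide)
      | simp [fval, h1', h0']

end Russo

theorem stmt7 (n : ℕ) (p : ℝ) (hp0 : 0 < p) (hp1 : p < 1)
    (f : (Fin n → Bool) → Bool) (hf : Mono f) :
    HasDerivAt (fun q => Ex n q (fval f))
      (Ex n p (fun ω => ((pivSet f ω).card : ℝ))) p := by
  classical
  -- Step 1: compute the derivative as a sum of dterms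
  have hderiv : HasDerivAt (fun q => Ex n q (fval f))
      (∑ ω : Fin n → Bool, ∑ i : Fin n, Russo.dterm f p i ω) p := by
    unfold Ex
    refine HasDerivAt.fun_sum fun ω _ => ?_
    have hW : HasDerivAt (fun q => W n q ω)
        (∑ i : Fin n, (∏ j ∈ Finset.univ.erase i, (if ω j then p else 1 - p)) •
          (if ω i then (1:ℝ) else -1)) p := by
      unfold W
      refine HasDerivAt.fun_finsetProd fun i _ => ?_
      by_cases hb : ω i = true
      · simp only [if_pos hb]; exact hasDerivAt_id p
      · simp only [if_neg hb]; exact (hasDerivAt_id p).const_sub 1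
    have h2 := hW.const_mul (fval f ω)
    refine h2.congr_deriv ?_
    rw [Finset.mul_sum]
    exact Finset.sum_congr rfl fun i _ => by rw [Russo.dterm, smul_eq_mul]
  have heq : (∑ ω : Fin n → Bool, ∑ i : Fin n, Russo.dterm f p i ω)
      = Ex n p (fun ω => ((pivSet f ω).card : ℝ)) := by
    rw [Finset.sum_comm]
    calc ∑ i : Fin n, ∑ ω : Fin n → Bool, Russo.dterm f p i ω
        = ∑ i : Fin n, ∑ ω : Fin n → Bool,
            (fval f (up1 ω i) - fval f (up0 ω i)) * W n p ω :=
          Finset.sum_congr rfl fun i _ => Russo.key_i f p i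
      _ = ∑ ω : Fin n → Bool, ∑ i : Fin n,
            (fval f (up1 ω i) - fval f (up0 ω i)) * W n p ω := Finset.sum_comm
      _ = ∑ ω : Fin n → Bool,
            (∑ i : Fin n, (fval f (up1 ω i) - fval f (up0 ω i))) * W n p ω :=
          Finset.sum_congr rfl fun ω _ => (Finset.sum_mul ..).symm
      _ = Ex n p (fun ω => ((pivSet f ω).card : ℝ)) :=
          Finset.sum_congr rfl fun ω _ => by rw [Russo.sum_D_eq_card f hf ω]
  exact heq ▸ hderiv
end

section
/- For any non-decreasing Boolean function f : {0,1}^n → {0,1} with P(f=1) > 0, E(S_n | f = 1) = (1/p)·E(|P(f)| | f = 1), where S_n = Σ_i X_i with X_i(ω) = ω(i)/p − (1−ω(i))/(1−p). -/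
open Finset Real

lemma keyi (n : ℕ) (p : ℝ) (hp0 : 0 < p) (hp1 : p < 1)
    (f : (Fin n → Bool) → Bool) (hf : Mono f) (i : Fin n) :
    ∑ ω : Fin n → Bool,
      (X n p i ω * fval f ω * W n p ω
        - (1/p) * ((if i ∈ pivSet f ω then (1:ℝ) else 0) * fval f ω * W n p ω)) = 0 := by
  have hp : (p:ℝ) ≠ 0 := ne_of_gt hp0
  have hq : (1:ℝ) - p ≠ 0 := by linarith
  refine Finset.sum_involution (fun ω _ => Function.update ω i (!(ω i))) ?_ ?_
    (fun _ _ => Finset.mem_univ _) ?_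
  · intro ω _
    set R : ℝ := ∏ j ∈ Finset.univ \ {i}, (if ω j then p else 1 - p) with hR
    have hWu : ∀ c : Bool, W n p (Function.update ω i c) = (if c then p else 1 - p) * R := by
      intro c
      unfold W
      have h1 : (fun j => if Function.update ω i c j then p else 1 - p)
          = Function.update (fun j => if ω j then p else 1 - p) i (if c then p else 1 - p) := by
        funext j
        by_cases h : j = i
        · subst h; simp
        · simp [Function.update_of_ne h]
      calc ∏ j, (if Function.update ω i c j then p else 1 - p)
          = ∏ j, Function.update (fun j => if ω j then p else 1 - p) i
              (if c then p else 1 - p) j := by rw [h1]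
        _ = (if c then p else 1 - p) * R := Finset.prod_update_of_mem (Finset.mem_univ i) _ _
    have hWs : W n p ω = (if ω i then p else 1 - p) * R := by
      have := hWu (ω i); rwa [Function.update_eq_self] at this
    have hWg : W n p (Function.update ω i (!(ω i))) = (if ω i then 1 - p else p) * R := by
      rw [hWu]; cases h : ω i <;> simp
    have hpiv : (i ∈ pivSet f (Function.update ω i (!(ω i)))) ↔ i ∈ pivSet f ω := by
      simp only [pivSet, Finset.mem_filter, Finset.mem_univ, true_and]
      simp [up1, up0, Function.update_idem]
    have hXg : X n p i (Function.update ω i (!(ω i))) =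
        (if ω i then -(1/(1-p)) else 1/p) := by
      cases h : ω i <;> simp [X, h]
    have hX : X n p i ω = (if ω i then 1/p else -(1/(1-p))) := by
      cases h : ω i <;> simp [X, h]
    have hfω : fval f ω = (if ω i then (if f (up1 ω i) then (1:ℝ) else 0)
        else (if f (up0 ω i) then 1 else 0)) := by
      cases hb : ω i
      · have h0 : up0 ω i = ω := by rw [up0, ← hb, Function.update_eq_self]
        simp [fval, h0]
      · have h1 : up1 ω i = ω := by rw [up1, ← hb, Function.update_eq_self]
        simp [fval, h1]
    have hfg : fval f (Function.update ω i (!(ω i))) =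
        (if ω i then (if f (up0 ω i) then (1:ℝ) else 0)
          else (if f (up1 ω i) then 1 else 0)) := by
      cases hb : ω i <;> simp [fval, up0, up1] <;> congr 1
    have hind : (if i ∈ pivSet f ω then (1:ℝ) else 0) =
        (if f (up1 ω i) = f (up0 ω i) then 0 else 1) := by
      by_cases h : f (up1 ω i) = f (up0 ω i) <;> simp [pivSet, h]
    rw [hX, hXg, hWs, hWg]
    simp only [hpiv]
    rw [hfω, hfg, hind]
    cases hb : ω i <;> cases hP : f (up1 ω i) <;> cases hQ : f (up0 ω i)
    all_goals
      first
        | (have h := hf ω i; rw [hP, hQ] at h; exact absurd h (by decide))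
        | (simp only [hb, hP, hQ, Bool.false_eq_true, Bool.true_eq_false, if_true, if_false,
            ite_true, ite_false, if_neg, Bool.false_ne_true]
           field_simp
           try ring)
  · intro ω _ _ heq
    have := congrFun heq i
    simp at this
  · intro ω _
    funext j
    by_cases h : j = i
    · subst h; simp
    · simp [Function.update_of_ne h]

lemma key_sum (n : ℕ) (p : ℝ) (hp0 : 0 < p) (hp1 : p < 1)
    (f : (Fin n → Bool) → Bool) (hf : Mono f) (i : Fin n) :
    ∑ ω : Fin n → Bool, X n p i ω * fval f ω * W n p ω
      = (1/p) * ∑ ω : Fin n → Bool,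
          (if i ∈ pivSet f ω then (1:ℝ) else 0) * fval f ω * W n p ω := by
  have h := keyi n p hp0 hp1 f hf i
  rw [Finset.sum_sub_distrib] at h
  rw [← Finset.mul_sum] at h
  linarith

lemma Ex_eq (n : ℕ) (p : ℝ) (hp0 : 0 < p) (hp1 : p < 1)
    (f : (Fin n → Bool) → Bool) (hf : Mono f) :
    Ex n p (fun ω => Sn n p ω * fval f ω) =
      (1/p) * Ex n p (fun ω => ((pivSet f ω).card : ℝ) * fval f ω) := by
  unfold Ex Sn
  have lhs : ∑ ω : Fin n → Bool, (∑ i, X n p i ω) * fval f ω * W n p ω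
      = ∑ i, ∑ ω : Fin n → Bool, X n p i ω * fval f ω * W n p ω := by
    rw [Finset.sum_comm]
    congr 1; funext ω
    rw [Finset.sum_mul, Finset.sum_mul]
  have rhs : ∀ ω : Fin n → Bool, ((pivSet f ω).card : ℝ)
      = ∑ i, (if i ∈ pivSet f ω then (1:ℝ) else 0) := by
    intro ω
    rw [Finset.sum_ite_mem, Finset.univ_inter, Finset.sum_const, nsmul_eq_mul, mul_one]
  calc ∑ ω : Fin n → Bool, (∑ i, X n p i ω) * fval f ω * W n p ω
      = ∑ i, ∑ ω : Fin n → Bool, X n p i ω * fval f ω * W n p ω := lhs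
    _ = ∑ i, (1/p) * ∑ ω : Fin n → Bool,
          (if i ∈ pivSet f ω then (1:ℝ) else 0) * fval f ω * W n p ω := by
        exact Finset.sum_congr rfl fun i _ => key_sum n p hp0 hp1 f hf i
    _ = (1/p) * ∑ i, ∑ ω : Fin n → Bool,
          (if i ∈ pivSet f ω then (1:ℝ) else 0) * fval f ω * W n p ω := by
        rw [Finset.mul_sum]
    _ = (1/p) * ∑ ω : Fin n → Bool, ((pivSet f ω).card : ℝ) * fval f ω * W n p ω := by
        congr 1
        rw [Finset.sum_comm]
        congr 1; funext ω
        rw [rhs ω, Finset.sum_mul, Finset.sum_mul]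

theorem stmt11 (n : ℕ) (p : ℝ) (hp0 : 0 < p) (hp1 : p < 1)
    (f : (Fin n → Bool) → Bool) (hf : Mono f)
    (hpos : 0 < Pr n p (fun ω => f ω = true)) :
    Ex n p (fun ω => Sn n p ω * fval f ω) / Pr n p (fun ω => f ω = true) =
      (1 / p) *
        (Ex n p (fun ω => ((pivSet f ω).card : ℝ) * fval f ω) /
          Pr n p (fun ω => f ω = true)) := by
  rw [Ex_eq n p hp0 hp1 f hf, mul_div_assoc]
end

section
/- For X a random variable with P(X = 1/p) = p, P(X = −1/(1−p)) = 1−p, the moment generating function φ(λ) = E(exp(λX)) satisfies φ(λ) ≤ exp(λ²/(2p²(1−p)²)) for all λ > 0. -/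
open Finset Real

theorem stmt14 (p : ℝ) (hp0 : 0 < p) (hp1 : p < 1) :
    ∀ l : ℝ, 0 < l →
      p * Real.exp (l / p) + (1 - p) * Real.exp (-l / (1 - p)) ≤
        Real.exp (l ^ 2 / (2 * p ^ 2 * (1 - p) ^ 2)) := by
  intro l _
  have hqne : (1:ℝ) - p ≠ 0 := by linarith
  have hpne : p ≠ 0 := hp0.ne'
  have hq0 : (0:ℝ) < 1 - p := by linarith
  -- φ(-l) ≥ 1 by weighted AM-GM
  have h1 : (1:ℝ) ≤ p * Real.exp (-l / p) + (1 - p) * Real.exp (l / (1 - p)) := by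
    have := Real.geom_mean_le_arith_mean2_weighted hp0.le hq0.le
      (Real.exp_pos (-l / p)).le (Real.exp_pos (l / (1 - p))).le (by ring)
    calc (1:ℝ) = Real.exp (-l / p) ^ p * Real.exp (l / (1 - p)) ^ (1 - p) := by
          rw [← Real.exp_mul, ← Real.exp_mul, ← Real.exp_add]
          rw [show -l / p * p + l / (1 - p) * (1 - p) = 0 by field_simp; ring]
          exact Real.exp_zero.symm
      _ ≤ _ := this
  have hφpos : 0 < p * Real.exp (l / p) + (1 - p) * Real.exp (-l / (1 - p)) := by
    positivity
  have h2 : p * Real.exp (l / p) + (1 - p) * Real.exp (-l / (1 - p)) ≤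
      (p * Real.exp (l / p) + (1 - p) * Real.exp (-l / (1 - p))) *
        (p * Real.exp (-l / p) + (1 - p) * Real.exp (l / (1 - p))) :=
    le_mul_of_one_le_right hφpos.le h1
  set Xv : ℝ := l / (p * (1 - p)) with hX
  have e1 : Real.exp (l/p) * Real.exp (-l/p) = 1 := by
    rw [← Real.exp_add, show l/p + -l/p = 0 by ring, Real.exp_zero]
  have e2 : Real.exp (-l/(1-p)) * Real.exp (l/(1-p)) = 1 := by
    rw [← Real.exp_add, show -l/(1-p) + l/(1-p) = 0 by ring, Real.exp_zero]
  have e3 : Real.exp (l/p) * Real.exp (l/(1-p)) = Real.exp Xv := by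
    rw [← Real.exp_add, hX]; congr 1; field_simp; ring
  have e4 : Real.exp (-l/(1-p)) * Real.exp (-l/p) = Real.exp (-Xv) := by
    rw [← Real.exp_add, hX]; congr 1; field_simp; ring
  have key : (p * Real.exp (l / p) + (1 - p) * Real.exp (-l / (1 - p))) *
      (p * Real.exp (-l / p) + (1 - p) * Real.exp (l / (1 - p))) =
      p^2 + (1-p)^2 + 2 * p * (1-p) * Real.cosh Xv := by
    rw [Real.cosh_eq]
    linear_combination p^2 * e1 + (1-p)^2 * e2 + p * (1-p) * e3 + p * (1-p) * e4
  have h3 : p^2 + (1-p)^2 + 2 * p * (1-p) * Real.cosh Xv ≤ Real.cosh Xv := by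
    nlinarith [Real.one_le_cosh Xv, sq_nonneg p, sq_nonneg (1-p), mul_pos hp0 hq0]
  have h4 : Real.cosh Xv ≤ Real.exp (l ^ 2 / (2 * p ^ 2 * (1 - p) ^ 2)) := by
    have := Real.cosh_le_exp_half_sq Xv
    have hXsq : Xv ^ 2 / 2 = l ^ 2 / (2 * p ^ 2 * (1 - p) ^ 2) := by
      rw [hX]; field_simp
    rwa [hXsq] at this
  exact h2.trans (key ▸ (h3.trans h4))
end

section
/- For any Boolean function f : {0,1}^n → {0,1}, P(f = 1) ≤ 2·exp(−(1/(2n))·(p(1−p)·E(S_n | f=1))²), under the Bernoulli(p) product measure. -/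
open Finset Real

/-- Per-coordinate MGF bound: `p e^{s(1-p)} + (1-p) e^{-sp} ≤ e^{s²/2}`. -/
lemma coordMgf (p s : ℝ) (hp0 : 0 < p) (hp1 : p < 1) :
    Real.exp (s * (1 - p)) * p + Real.exp (s * (-p)) * (1 - p) ≤ Real.exp (s ^ 2 / 2) := by
  have h1 : Real.exp (s * (1 - p)) ≤ p / 2 * Real.exp (-s) + (1 - p / 2) * Real.exp s := by
    have h := convexOn_exp.2 (Set.mem_univ (-s)) (Set.mem_univ s)
      (by linarith : (0:ℝ) ≤ p / 2) (by linarith : (0:ℝ) ≤ 1 - p / 2) (by ring)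
    simp only [smul_eq_mul] at h
    rw [show p / 2 * (-s) + (1 - p / 2) * s = s * (1 - p) from by ring] at h
    exact h
  have h2 : Real.exp (s * (-p)) ≤ (1 + p) / 2 * Real.exp (-s) + (1 - p) / 2 * Real.exp s := by
    have h := convexOn_exp.2 (Set.mem_univ (-s)) (Set.mem_univ s)
      (by linarith : (0:ℝ) ≤ (1 + p) / 2) (by linarith : (0:ℝ) ≤ (1 - p) / 2) (by ring)
    simp only [smul_eq_mul] at h
    rw [show (1 + p) / 2 * (-s) + (1 - p) / 2 * s = s * (-p) from by ring] at h
    exact h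
  have h3 : Real.cosh s ≤ Real.exp (s ^ 2 / 2) := Real.cosh_le_exp_half_sq s
  rw [Real.cosh_eq] at h3
  have e1 := mul_le_mul_of_nonneg_right h1 hp0.le
  have e2 := mul_le_mul_of_nonneg_right h2 (by linarith : (0:ℝ) ≤ 1 - p)
  have hid : (p / 2 * Real.exp (-s) + (1 - p / 2) * Real.exp s) * p +
      ((1 + p) / 2 * Real.exp (-s) + (1 - p) / 2 * Real.exp s) * (1 - p) =
      (Real.exp s + Real.exp (-s)) / 2 := by ring
  linarith

/-- MGF bound for the rescaled sum `p(1-p) Sₙ`. -/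
lemma mgfBound (n : ℕ) (p : ℝ) (hp0 : 0 < p) (hp1 : p < 1) (s : ℝ) :
    ∑ ω : Fin n → Bool, Real.exp (s * (p * (1 - p) * Sn n p ω)) * W n p ω ≤
      Real.exp (n * s ^ 2 / 2) := by
  have hp0' : p ≠ 0 := ne_of_gt hp0
  have hp1' : (1 : ℝ) - p ≠ 0 := by linarith
  set h : Bool → ℝ :=
    fun b => Real.exp (s * (if b then 1 - p else -p)) * (if b then p else 1 - p) with hh
  have key : ∀ ω : Fin n → Bool,
      Real.exp (s * (p * (1 - p) * Sn n p ω)) * W n p ω = ∏ i : Fin n, h (ω i) := by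
    intro ω
    simp only [hh]
    rw [Finset.prod_mul_distrib]
    have harg : s * (p * (1 - p) * Sn n p ω) = ∑ i : Fin n, s * (if ω i then 1 - p else -p) := by
      rw [Sn, Finset.mul_sum, Finset.mul_sum]
      refine Finset.sum_congr rfl fun i _ => ?_
      rw [X]
      by_cases hb : ω i <;> simp [hb] <;> field_simp <;> ring <;> simp
    rw [harg, Real.exp_sum, W]
  calc ∑ ω : Fin n → Bool, Real.exp (s * (p * (1 - p) * Sn n p ω)) * W n p ω
      = ∑ ω : Fin n → Bool, ∏ i : Fin n, h (ω i) := Finset.sum_congr rfl fun ω _ => key ω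
    _ = ∏ _i : Fin n, ∑ b : Bool, h b := (Fintype.prod_sum fun _ : Fin n => h).symm
    _ ≤ ∏ _i : Fin n, Real.exp (s ^ 2 / 2) := by
        refine Finset.prod_le_prod (fun i _ => ?_) (fun i _ => ?_)
        · refine Finset.sum_nonneg fun b _ => ?_
          have h1 := Real.exp_pos (s * (if b then 1 - p else (-p)))
          simp only [hh]
          cases b <;> simp_all <;> nlinarith
        · simp only [hh, Fintype.sum_bool, if_true, if_false]
          exact coordMgf p s hp0 hp1
    _ = Real.exp (n * s ^ 2 / 2) := by
        rw [Finset.prod_const, Finset.card_univ, Fintype.card_fin, ← Real.exp_nat_mul]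
        congr 1
        ring

theorem stmt16 (n : ℕ) (hn : 1 ≤ n) (p : ℝ) (hp0 : 0 < p) (hp1 : p < 1)
    (f : (Fin n → Bool) → Bool)
    (hpos : 0 < Pr n p (fun ω => f ω = true)) :
    Pr n p (fun ω => f ω = true) ≤
      2 * Real.exp (-(1 / (2 * n)) *
        (p * (1 - p) *
          (Ex n p (fun ω => Sn n p ω * fval f ω) /
            Pr n p (fun ω => f ω = true))) ^ 2) := by
  classical
  set A : Finset (Fin n → Bool) := Finset.univ.filter (fun ω => f ω = true) with hA
  set P : ℝ := Pr n p (fun ω => f ω = true) with hPdef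
  have hnpos : (0 : ℝ) < n := by exact_mod_cast hn
  have hP : P = ∑ ω ∈ A, W n p ω := rfl
  have hWpos : ∀ ω : Fin n → Bool, 0 < W n p ω := by
    intro ω
    refine Finset.prod_pos fun i _ => ?_
    split <;> linarith
  -- the conditional expectation numerator
  have hEx : Ex n p (fun ω => Sn n p ω * fval f ω) = ∑ ω ∈ A, Sn n p ω * W n p ω := by
    rw [Ex, hA, Finset.sum_filter]
    refine Finset.sum_congr rfl fun ω _ => ?_
    by_cases h : f ω = true <;> simp [fval, h]
  set E0 : ℝ := ∑ ω ∈ A, Sn n p ω * W n p ω with hE0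
  set μ : ℝ := p * (1 - p) * (E0 / P) with hμ
  set s : ℝ := μ / n with hs
  -- MGF and restricted MGF
  set M : ℝ := ∑ ω : Fin n → Bool, Real.exp (s * (p * (1 - p) * Sn n p ω)) * W n p ω with hM
  set SA : ℝ := ∑ ω ∈ A, Real.exp (s * (p * (1 - p) * Sn n p ω)) * W n p ω with hSA
  have hMle : M ≤ Real.exp (n * s ^ 2 / 2) := mgfBound n p hp0 hp1 s
  have hAne : A.Nonempty := by
    rcases Finset.eq_empty_or_nonempty A with h | h
    · rw [hP, h] at hpos; simp at hpos
    · exact h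
  have hSApos : 0 < SA :=
    Finset.sum_pos (fun ω _ => mul_pos (Real.exp_pos _) (hWpos ω)) hAne
  have hSAleM : SA ≤ M := by
    refine Finset.sum_le_sum_of_subset_of_nonneg (Finset.subset_univ A) fun ω _ _ =>
      le_of_lt (mul_pos (Real.exp_pos _) (hWpos ω))
  have hMpos : 0 < M := lt_of_lt_of_le hSApos hSAleM
  set κ : ℝ := SA / P with hκ
  have hκpos : 0 < κ := div_pos hSApos hpos
  -- pointwise entropy inequality
  have hpoint : ∀ ω ∈ A,
      s * (p * (1 - p) * Sn n p ω) * W n p ω ≤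
        (Real.exp (s * (p * (1 - p) * Sn n p ω)) / κ - 1 + Real.log κ) * W n p ω := by
    intro ω _
    have hx : 0 < Real.exp (s * (p * (1 - p) * Sn n p ω)) / κ :=
      div_pos (Real.exp_pos _) hκpos
    have hlog := Real.log_le_sub_one_of_pos hx
    rw [Real.log_div (ne_of_gt (Real.exp_pos _)) (ne_of_gt hκpos), Real.log_exp] at hlog
    have : s * (p * (1 - p) * Sn n p ω) ≤
        Real.exp (s * (p * (1 - p) * Sn n p ω)) / κ - 1 + Real.log κ := by linarith
    exact mul_le_mul_of_nonneg_right this (le_of_lt (hWpos ω))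
  have hsum := Finset.sum_le_sum hpoint
  -- compute both sides of the summed inequality
  have hlhs : ∑ ω ∈ A, s * (p * (1 - p) * Sn n p ω) * W n p ω = s * (p * (1 - p)) * E0 := by
    rw [hE0, Finset.mul_sum]
    exact Finset.sum_congr rfl fun ω _ => by ring
  have hrhs : ∑ ω ∈ A, (Real.exp (s * (p * (1 - p) * Sn n p ω)) / κ - 1 + Real.log κ) * W n p ω
      = SA / κ - P + Real.log κ * P := by
    rw [hSA, hP]
    rw [Finset.sum_div, Finset.mul_sum]
    rw [← Finset.sum_sub_distrib, ← Finset.sum_add_distrib]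
    exact Finset.sum_congr rfl fun ω _ => by ring
  have hSAκ : SA / κ = P := by
    rw [hκ]; field_simp
  have hkey : s * (p * (1 - p)) * E0 ≤ Real.log κ * P := by
    rw [hlhs, hrhs, hSAκ] at hsum; linarith
  -- bound log κ
  have hlogκ : Real.log κ ≤ n * s ^ 2 / 2 - Real.log P := by
    have h1 : Real.log κ = Real.log SA - Real.log P :=
      Real.log_div (ne_of_gt hSApos) (ne_of_gt hpos)
    have h2 : Real.log SA ≤ Real.log M := Real.log_le_log hSApos hSAleM
    have h3 : Real.log M ≤ n * s ^ 2 / 2 := by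
      calc Real.log M ≤ Real.log (Real.exp (n * s ^ 2 / 2)) := Real.log_le_log hMpos hMle
        _ = n * s ^ 2 / 2 := Real.log_exp _
    linarith
  -- final algebra
  have hμE : p * (1 - p) * E0 = μ * P := by
    rw [hμ]; field_simp
  have hfin : s * (μ * P) ≤ (n * s ^ 2 / 2 - Real.log P) * P := by
    calc s * (μ * P) = s * (p * (1 - p)) * E0 := by rw [← hμE]; ring
      _ ≤ Real.log κ * P := hkey
      _ ≤ (n * s ^ 2 / 2 - Real.log P) * P :=
          mul_le_mul_of_nonneg_right hlogκ (le_of_lt hpos)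
  have hsμ : s * μ = μ ^ 2 / n := by rw [hs]; field_simp
  have hns : n * s ^ 2 / 2 = μ ^ 2 / (2 * n) := by
    rw [hs]; field_simp
  have hlogP : Real.log P ≤ -(μ ^ 2 / (2 * n)) := by
    have hPne : (0:ℝ) < P := hpos
    have : s * μ * P ≤ (μ ^ 2 / (2 * n) - Real.log P) * P := by
      rw [← hns]; calc s * μ * P = s * (μ * P) := by ring
        _ ≤ (n * s ^ 2 / 2 - Real.log P) * P := hfin
    have h4 : s * μ ≤ μ ^ 2 / (2 * n) - Real.log P :=
      le_of_mul_le_mul_right (by linarith [this]) hPne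
    rw [hsμ] at h4
    have h5 : μ ^ 2 / n - μ ^ 2 / (2 * n) = μ ^ 2 / (2 * n) := by
      field_simp; ring
    linarith
  have hPle : P ≤ Real.exp (-(μ ^ 2 / (2 * n))) := by
    calc P = Real.exp (Real.log P) := (Real.exp_log hpos).symm
      _ ≤ Real.exp (-(μ ^ 2 / (2 * n))) := Real.exp_le_exp.mpr hlogP
  have hexp_eq : -(1 / (2 * (n:ℝ))) *
      (p * (1 - p) * (Ex n p (fun ω => Sn n p ω * fval f ω) / P)) ^ 2 = -(μ ^ 2 / (2 * n)) := by
    rw [hEx, ← hμ]; ring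
  rw [hexp_eq]
  have := Real.exp_pos (-(μ ^ 2 / (2 * (n:ℝ))))
  linarith
end

section
/- For any Boolean function f : {0,1}^n → {0,1}, P(f = 1) ≤ 2·exp(−(1/2)·Σ_{i=1}^n (p(1−p)·E(X_i | f=1))²), where X_i(ω) = ω(i)/p − (1−ω(i))/(1−p). -/
open Finset Real

set_option maxHeartbeats 1000000

lemma sum_prod_bool (n : ℕ) (g : Fin n → Bool → ℝ) :
    ∑ ω : Fin n → Bool, ∏ i, g i (ω i) = ∏ i, (g i true + g i false) := by
  rw [← Fintype.prod_sum]
  congr 1; ext i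
  rw [Fintype.sum_bool]

lemma my_pinsker (p q : ℝ) (hp0 : 0 < p) (hp1 : p < 1) (hq0 : 0 ≤ q) (hq1 : q ≤ 1) :
    (q - p) ^ 2 ≤ q * Real.log (q / p) + (1 - q) * Real.log ((1 - q) / (1 - p)) := by
  have hp1' : 0 < 1 - p := by linarith
  rcases eq_or_lt_of_le hq0 with h0 | h0
  · -- q = 0
    rw [← h0]
    have hlog : Real.log (1 - p) ≤ (1 - p) - 1 := Real.log_le_sub_one_of_pos hp1'
    have h2 : Real.log ((1 - 0) / (1 - p)) = - Real.log (1 - p) := by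
      rw [sub_zero, one_div, Real.log_inv]
    rw [h2]
    simp only [zero_mul, zero_add, sub_zero, one_mul]
    nlinarith
  rcases eq_or_lt_of_le hq1 with h1 | h1
  · -- q = 1
    rw [h1]
    have hlog : Real.log p ≤ p - 1 := Real.log_le_sub_one_of_pos hp0
    have h2 : Real.log (1 / p) = - Real.log p := by rw [one_div, Real.log_inv]
    rw [h2]
    simp only [sub_self, zero_mul, add_zero, one_mul]
    nlinarith
  -- interior case
  have hq1' : 0 < 1 - q := by linarith
  set u := Real.sqrt p with hu
  set v := Real.sqrt q with hv
  set u' := Real.sqrt (1 - p) with hu'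
  set v' := Real.sqrt (1 - q) with hv'
  have hu2 : u ^ 2 = p := Real.sq_sqrt hp0.le
  have hv2 : v ^ 2 = q := Real.sq_sqrt h0.le
  have hu'2 : u' ^ 2 = 1 - p := Real.sq_sqrt hp1'.le
  have hv'2 : v' ^ 2 = 1 - q := Real.sq_sqrt hq1'.le
  have hupos : 0 < u := Real.sqrt_pos.2 hp0
  have hvpos : 0 < v := Real.sqrt_pos.2 h0
  have hu'pos : 0 < u' := Real.sqrt_pos.2 hp1'
  have hv'pos : 0 < v' := Real.sqrt_pos.2 hq1'
  have key1 : 2 * v ^ 2 - 2 * (u * v) ≤ q * Real.log (q / p) := by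
    have h : Real.log (p / q) = 2 * Real.log (u / v) := by
      rw [show p / q = (u / v) ^ 2 by rw [div_pow, hu2, hv2], Real.log_pow]
      push_cast; ring
    have h2 : Real.log (u / v) ≤ u / v - 1 := Real.log_le_sub_one_of_pos (by positivity)
    have h3 : Real.log (q / p) = - Real.log (p / q) := by
      rw [← Real.log_inv]; congr 1; field_simp
    rw [h3, h]
    have h4 : q * (u / v) = u * v := by rw [← hv2]; field_simp
    have h5 : q * (2 * (u / v) - 2) ≥ q * (2 * Real.log (u / v)) :=
      mul_le_mul_of_nonneg_left (by linarith) h0.le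
    have h6 : q * (2 * (u / v) - 2) = 2 * (u * v) - 2 * v ^ 2 := by
      rw [mul_sub, mul_comm q (2 * (u / v)), mul_assoc, mul_comm (u/v) q, h4, hv2]; ring
    nlinarith [h5, h6]
  have key2 : 2 * v' ^ 2 - 2 * (u' * v') ≤ (1 - q) * Real.log ((1 - q) / (1 - p)) := by
    have h : Real.log ((1 - p) / (1 - q)) = 2 * Real.log (u' / v') := by
      rw [show (1 - p) / (1 - q) = (u' / v') ^ 2 by rw [div_pow, hu'2, hv'2], Real.log_pow]
      push_cast; ring
    have h2 : Real.log (u' / v') ≤ u' / v' - 1 := Real.log_le_sub_one_of_pos (by positivity)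
    have h3 : Real.log ((1 - q) / (1 - p)) = - Real.log ((1 - p) / (1 - q)) := by
      rw [← Real.log_inv]; congr 1; field_simp
    rw [h3, h]
    have h4 : (1 - q) * (u' / v') = u' * v' := by rw [← hv'2]; field_simp
    have h5 : (1 - q) * (2 * (u' / v') - 2) ≥ (1 - q) * (2 * Real.log (u' / v')) :=
      mul_le_mul_of_nonneg_left (by linarith) hq1'.le
    have h6 : (1 - q) * (2 * (u' / v') - 2) = 2 * (u' * v') - 2 * v' ^ 2 := by
      rw [mul_sub, mul_comm (1-q) (2 * (u' / v')), mul_assoc, mul_comm (u'/v') (1-q), h4, hv'2]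
      ring
    nlinarith [h5, h6]
  have cauchy : u * v + u' * v' ≤ 1 := by
    nlinarith [sq_nonneg (u * v' - u' * v), mul_pos hupos hvpos, mul_pos hu'pos hv'pos]
  have poly : (q - p) ^ 2 ≤ (u - v) ^ 2 + (u' - v') ^ 2 := by
    have hA : (q - p) ^ 2 = (u - v) ^ 2 * (u + v) ^ 2 := by rw [← hu2, ← hv2]; ring
    have hB : (q - p) ^ 2 = (u' - v') ^ 2 * (u' + v') ^ 2 := by
      have h : q - p = (1 - p) - (1 - q) := by ring
      rw [h, ← hu'2, ← hv'2]; ring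
    obtain ⟨s, hs⟩ : ∃ s, s = (u + v) ^ 2 := ⟨_, rfl⟩
    obtain ⟨s', hs'⟩ : ∃ s', s' = (u' + v') ^ 2 := ⟨_, rfl⟩
    have hspos : 0 < s := hs ▸ by positivity
    have hs'pos : 0 < s' := hs' ▸ by positivity
    have hsum4 : s + s' ≤ 4 := by
      have he : s + s' = (u ^ 2 + u' ^ 2 + v ^ 2 + v' ^ 2) + 2 * (u * v + u' * v') := by
        rw [hs, hs']; ring
      rw [he, hu2, hu'2, hv2, hv'2]; linarith
    have hss : s * s' ≤ s + s' := by nlinarith [sq_nonneg (s - s'), hsum4, hspos, hs'pos]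
    rw [← hs] at hA
    rw [← hs'] at hB
    have h1 : (q - p) ^ 2 * (s * s') ≤ ((u - v) ^ 2 + (u' - v') ^ 2) * (s * s') := by
      have e : ((u - v) ^ 2 + (u' - v') ^ 2) * (s * s') = (q - p) ^ 2 * (s + s') := by
        rw [add_mul]
        rw [show (u - v) ^ 2 * (s * s') = ((u - v) ^ 2 * s) * s' by ring, ← hA]
        rw [show (u' - v') ^ 2 * (s * s') = ((u' - v') ^ 2 * s') * s by ring, ← hB]
        ring
      rw [e]
      exact mul_le_mul_of_nonneg_left hss (sq_nonneg _)
    exact le_of_mul_le_mul_right h1 (mul_pos hspos hs'pos)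
  have expand : (u - v) ^ 2 + (u' - v') ^ 2 =
      (u ^ 2 + u' ^ 2 + v ^ 2 + v' ^ 2) - 2 * (u * v + u' * v') := by ring
  rw [expand, hu2, hu'2, hv2, hv'2] at poly
  linarith [key1, key2, poly, hv2, hv'2]

theorem stmt18 (n : ℕ) (p : ℝ) (hp0 : 0 < p) (hp1 : p < 1)
    (f : (Fin n → Bool) → Bool)
    (hpos : 0 < Pr n p (fun ω => f ω = true)) :
    Pr n p (fun ω => f ω = true) ≤
      2 * Real.exp (-(1 / 2) *
        ∑ i : Fin n,
          (p * (1 - p) *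
            (Ex n p (fun ω => X n p i ω * fval f ω) /
              Pr n p (fun ω => f ω = true))) ^ 2) := by
  have hp1' : 0 < 1 - p := by linarith
  classical
  set A : Finset (Fin n → Bool) := Finset.univ.filter (fun ω => f ω = true) with hA
  set t : ℝ := Pr n p (fun ω => f ω = true) with htdef
  have hWpos : ∀ ω : Fin n → Bool, 0 < W n p ω := by
    intro ω; apply Finset.prod_pos; intro i _; split <;> linarith
  have htA : t = ∑ ω ∈ A, W n p ω := rfl
  have hsum1 : ∑ ω : Fin n → Bool, W n p ω = 1 := by
    have := sum_prod_bool n (fun i b => if b then p else 1 - p)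
    simp only [if_true, if_false] at this
    rw [show (W n p) = fun ω => ∏ i, if ω i then p else 1 - p from rfl]
    rw [this]
    simp
  have ht1 : t ≤ 1 := by
    rw [htA, ← hsum1]
    exact Finset.sum_le_sum_of_subset_of_nonneg (Finset.subset_univ A)
      (fun ω _ _ => (hWpos ω).le)
  -- marginals
  set T1 : Fin n → ℝ := fun i => ∑ ω ∈ A.filter (fun ω => ω i = true), W n p ω with hT1
  set T0 : Fin n → ℝ := fun i => ∑ ω ∈ A.filter (fun ω => ¬ (ω i = true)), W n p ω with hT0
  have hTsum : ∀ i, T1 i + T0 i = t := fun i =>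
    Finset.sum_filter_add_sum_filter_not A _ _
  set q : Fin n → ℝ := fun i => T1 i / t with hq
  have hT1nonneg : ∀ i, 0 ≤ T1 i := fun i => Finset.sum_nonneg fun ω _ => (hWpos ω).le
  have hT0nonneg : ∀ i, 0 ≤ T0 i := fun i => Finset.sum_nonneg fun ω _ => (hWpos ω).le
  have hq0 : ∀ i, 0 ≤ q i := fun i => div_nonneg (hT1nonneg i) hpos.le
  have hq1 : ∀ i, q i ≤ 1 := by
    intro i
    rw [hq]
    rw [div_le_one hpos]
    have := hTsum i
    linarith [hT0nonneg i]
  have h1q : ∀ i, 1 - q i = T0 i / t := by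
    intro i
    have := hTsum i
    field_simp [hq]
    rw [sub_mul, one_mul, show q i * t = T1 i from div_mul_cancel₀ _ hpos.ne']
    linarith
  -- step 1 : the coefficients are q i - p
  have hEx : ∀ i, p * (1 - p) * (Ex n p (fun ω => X n p i ω * fval f ω) / t) = q i - p := by
    intro i
    have hExpand : Ex n p (fun ω => X n p i ω * fval f ω) = ∑ ω ∈ A, X n p i ω * W n p ω := by
      rw [Ex, hA, Finset.sum_filter]
      apply Finset.sum_congr rfl
      intro ω _
      by_cases hfo : f ω = true
      · simp [fval, hfo]
      · simp [fval, hfo]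
    have e1 : ∑ ω ∈ A.filter (fun ω => ω i = true), X n p i ω * W n p ω
        = (1 / p) * T1 i := by
      rw [hT1, Finset.mul_sum]
      apply Finset.sum_congr rfl
      intro ω hω
      have hb : ω i = true := (Finset.mem_filter.1 hω).2
      rw [X, if_pos hb]
      ring
    have e0 : ∑ ω ∈ A.filter (fun ω => ¬ (ω i = true)), X n p i ω * W n p ω
        = -((1 / (1 - p)) * T0 i) := by
      rw [hT0, Finset.mul_sum, ← Finset.sum_neg_distrib]
      apply Finset.sum_congr rfl
      intro ω hω
      have hb : ¬ (ω i = true) := (Finset.mem_filter.1 hω).2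
      rw [X, if_neg hb]
      ring
    have hsplit : Ex n p (fun ω => X n p i ω * fval f ω)
        = (1 / p) * T1 i - (1 / (1 - p)) * T0 i := by
      rw [hExpand, ← Finset.sum_filter_add_sum_filter_not A (fun ω => ω i = true), e1, e0]
      ring
    have hT0t : T0 i = t - T1 i := by linarith [hTsum i]
    rw [hsplit, hT0t, hq]
    field_simp
    ring
  -- step 2 : the key entropy inequality
  have hkey : ∑ i : Fin n, (q i - p) ^ 2 ≤ - Real.log t := by
    set c : Fin n → ℝ := fun i => Real.log (q i / p) with hc
    set d : Fin n → ℝ := fun i => Real.log ((1 - q i) / (1 - p)) with hd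
    set μ : (Fin n → Bool) → ℝ := fun ω => W n p ω / t with hμ
    set hh : (Fin n → Bool) → ℝ := fun ω => ∑ i, (if ω i then c i else d i) with hhh
    have hμnonneg : ∀ ω, 0 ≤ μ ω := fun ω => div_nonneg (hWpos ω).le hpos.le
    have hμsum : ∑ ω ∈ A, μ ω = 1 := by
      simp only [hμ]
      rw [← Finset.sum_div, ← htA, div_self hpos.ne']
    have jensen : Real.exp (∑ ω ∈ A, μ ω * hh ω) ≤ ∑ ω ∈ A, μ ω * Real.exp (hh ω) := by
      have := convexOn_exp.map_sum_le (t := A) (w := μ) (p := hh)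
        (fun ω _ => hμnonneg ω) hμsum (fun ω _ => Set.mem_univ _)
      simpa [smul_eq_mul] using this
    have hLHS : ∑ ω ∈ A, μ ω * hh ω = ∑ i, (q i * c i + (1 - q i) * d i) := by
      calc ∑ ω ∈ A, μ ω * hh ω
          = ∑ ω ∈ A, ∑ i, μ ω * (if ω i then c i else d i) := by
            apply Finset.sum_congr rfl; intro ω _; rw [hhh]; exact Finset.mul_sum _ _ _
        _ = ∑ i, ∑ ω ∈ A, μ ω * (if ω i then c i else d i) := Finset.sum_comm
        _ = ∑ i, (q i * c i + (1 - q i) * d i) := by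
            apply Finset.sum_congr rfl; intro i _
            rw [← Finset.sum_filter_add_sum_filter_not A (fun ω => ω i = true)]
            have e1 : ∑ ω ∈ A.filter (fun ω => ω i = true),
                μ ω * (if ω i then c i else d i) = q i * c i := by
              rw [Finset.sum_congr rfl (fun ω hω => by
                rw [if_pos (Finset.mem_filter.1 hω).2] :
                  ∀ ω ∈ A.filter (fun ω => ω i = true),
                    μ ω * (if ω i then c i else d i) = μ ω * c i)]
              rw [← Finset.sum_mul]
              simp only [hμ]
              rw [← Finset.sum_div]
            have e0 : ∑ ω ∈ A.filter (fun ω => ¬ (ω i = true)),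
                μ ω * (if ω i then c i else d i) = (1 - q i) * d i := by
              rw [Finset.sum_congr rfl (fun ω hω => by
                rw [if_neg (Finset.mem_filter.1 hω).2] :
                  ∀ ω ∈ A.filter (fun ω => ¬ (ω i = true)),
                    μ ω * (if ω i then c i else d i) = μ ω * d i)]
              rw [← Finset.sum_mul]
              simp only [hμ]
              rw [← Finset.sum_div, h1q i]
            rw [e1, e0]
    have hRHS : ∑ ω ∈ A, μ ω * Real.exp (hh ω) ≤ 1 / t := by
      have hpt : ∀ ω ∈ A, μ ω * Real.exp (hh ω)
          = (∏ i, (if ω i then q i else 1 - q i)) / t := by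
        intro ω hωA
        have hq_pos : ∀ i, ω i = true → 0 < q i := by
          intro i hi
          apply div_pos _ hpos
          rw [hT1]
          have hmem : ω ∈ A.filter (fun ω' => ω' i = true) := Finset.mem_filter.2 ⟨hωA, hi⟩
          exact lt_of_lt_of_le (hWpos ω)
            (Finset.single_le_sum (fun ω' _ => (hWpos ω').le) hmem)
        have hq_lt : ∀ i, ¬ (ω i = true) → 0 < 1 - q i := by
          intro i hi
          rw [h1q i]
          apply div_pos _ hpos
          rw [hT0]
          have hmem : ω ∈ A.filter (fun ω' => ¬ (ω' i = true)) :=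
            Finset.mem_filter.2 ⟨hωA, hi⟩
          exact lt_of_lt_of_le (hWpos ω)
            (Finset.single_le_sum (fun ω' _ => (hWpos ω').le) hmem)
        have hexp : Real.exp (hh ω)
            = ∏ i, ((if ω i then q i else 1 - q i) / (if ω i then p else 1 - p)) := by
          simp only [hhh]
          rw [Real.exp_sum]
          apply Finset.prod_congr rfl
          intro i _
          by_cases hb : ω i = true
          · rw [if_pos hb, if_pos hb, if_pos hb, hc]
            exact Real.exp_log (div_pos (hq_pos i hb) hp0)
          · rw [if_neg hb, if_neg hb, if_neg hb, hd]
            exact Real.exp_log (div_pos (hq_lt i hb) hp1')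
        rw [hexp, Finset.prod_div_distrib]
        rw [show (∏ i, if ω i then p else 1 - p) = W n p ω from rfl]
        simp only [hμ]
        rw [div_mul_div_comm]
        rw [mul_comm t (W n p ω)]
        exact mul_div_mul_left _ _ (hWpos ω).ne'
      rw [Finset.sum_congr rfl hpt, ← Finset.sum_div]
      have hPle : ∑ ω ∈ A, ∏ i, (if ω i then q i else 1 - q i) ≤ 1 := by
        have hle : ∑ ω ∈ A, ∏ i, (if ω i then q i else 1 - q i)
            ≤ ∑ ω : Fin n → Bool, ∏ i, (if ω i then q i else 1 - q i) :=
          Finset.sum_le_sum_of_subset_of_nonneg (Finset.subset_univ A)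
            (fun ω _ _ => Finset.prod_nonneg fun i _ => by
              by_cases hb : ω i = true
              · rw [if_pos hb]; exact hq0 i
              · rw [if_neg hb]; linarith [hq1 i])
        have heq : ∑ ω : Fin n → Bool, ∏ i, (if ω i then q i else 1 - q i) = 1 := by
          rw [sum_prod_bool n (fun i b => if b then q i else 1 - q i)]
          simp
        linarith
      gcongr
    have hchain : Real.exp (∑ i, (q i * c i + (1 - q i) * d i)) ≤ 1 / t := by
      rw [← hLHS]; exact jensen.trans hRHS
    have hKL : ∑ i, (q i * c i + (1 - q i) * d i) ≤ - Real.log t := by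
      have h := (Real.le_log_iff_exp_le (by positivity : (0:ℝ) < 1 / t)).2 hchain
      rwa [one_div, Real.log_inv] at h
    refine le_trans (Finset.sum_le_sum fun i _ => ?_) hKL
    simpa [hc, hd] using my_pinsker p (q i) hp0 hp1 (hq0 i) (hq1 i)
  -- final chain
  have hrw : ∑ i : Fin n,
      (p * (1 - p) * (Ex n p (fun ω => X n p i ω * fval f ω) / t)) ^ 2
      = ∑ i : Fin n, (q i - p) ^ 2 := by
    exact Finset.sum_congr rfl fun i _ => by rw [hEx i]
  rw [hrw]
  have h2 : Real.exp ((1/2) * Real.log t) = Real.sqrt t := by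
    rw [Real.sqrt_eq_rpow, Real.rpow_def_of_pos hpos, mul_comm]
  have h3 : t ≤ Real.sqrt t := by
    nlinarith [Real.sq_sqrt hpos.le, Real.sqrt_nonneg t, ht1, hpos]
  have h4 : Real.exp ((1/2) * Real.log t) ≤ Real.exp (-(1/2) * ∑ i : Fin n, (q i - p) ^ 2) := by
    apply Real.exp_le_exp.2
    nlinarith [hkey]
  have := Real.exp_pos (-(1/2) * ∑ i : Fin n, (q i - p) ^ 2)
  calc t ≤ Real.sqrt t := h3
    _ = Real.exp ((1/2) * Real.log t) := h2.symm
    _ ≤ Real.exp (-(1/2) * ∑ i : Fin n, (q i - p) ^ 2) := h4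
    _ ≤ 2 * Real.exp (-(1/2) * ∑ i : Fin n, (q i - p) ^ 2) := by linarith
end

section
/- For any non-decreasing Boolean function f : {0,1}^n → {0,1}, P(f = 1) ≤ 2·exp(−(1/2)·Σ_{i=1}^n ((1−p)·P(i ∈ P(f) | f=1))²). -/
open Finset Real

-- quad bound
lemma quad_bound {x : ℝ} (hx : |x| ≤ 1) : Real.exp x ≤ 1 + x + (3/4) * x ^ 2 := by
  have h := Real.exp_bound hx (n := 2) (by norm_num)
  have h2 : ∑ m ∈ range 2, x ^ m / m.factorial = 1 + x := by
    simp [Finset.sum_range_succ]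
  rw [h2] at h
  have h3 := (abs_sub_le_iff.1 h).1
  have h4 : |x| ^ 2 = x ^ 2 := sq_abs x
  rw [h4] at h3
  norm_num at h3
  linarith

lemma mgf_bound (p a : ℝ) (hp0 : 0 < p) (hp1 : p < 1) (ha0 : 0 ≤ a) (ha1 : a ≤ 1) :
    p * Real.exp (a * (1 - p)) + (1 - p) * Real.exp (-(a * p)) ≤ Real.exp (a ^ 2 / 2) := by
  have h1 : |a * (1 - p)| ≤ 1 := by
    rw [abs_of_nonneg (by nlinarith)]; nlinarith
  have h2 : |(-(a * p))| ≤ 1 := by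
    rw [abs_of_nonpos (by nlinarith)]; nlinarith
  have e1 := quad_bound h1
  have e2 := quad_bound h2
  have e3 := Real.add_one_le_exp (a ^ 2 / 2)
  nlinarith [sq_nonneg a, sq_nonneg (a * (1 - p)), sq_nonneg (a * p), mul_pos hp0 (by linarith : (0:ℝ) < 1 - p), sq_nonneg (a * (1 - 2*p)), mul_nonneg (mul_nonneg ha0 ha0) (mul_nonneg hp0.le (by linarith : (0:ℝ) ≤ 1-p))]

lemma W_nonneg {n : ℕ} {p : ℝ} (hp0 : 0 ≤ p) (hp1 : p ≤ 1) (ω : Fin n → Bool) :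
    0 ≤ W n p ω :=
  Finset.prod_nonneg fun i _ => by split <;> linarith

lemma W_update {n : ℕ} (p : ℝ) (ω : Fin n → Bool) (i : Fin n) (b : Bool) :
    W n p (Function.update ω i b) =
      (if b then p else 1 - p) * ∏ j ∈ Finset.univ.erase i, (if ω j then p else 1 - p) := by
  unfold W
  rw [← Finset.mul_prod_erase _ _ (Finset.mem_univ i), Function.update_self]
  congr 1
  exact Finset.prod_congr rfl fun j hj => by
    rw [Function.update_of_ne (Finset.mem_erase.1 hj).1]

lemma sum_split {n : ℕ} (i : Fin n) (h : (Fin n → Bool) → ℝ) :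
    ∑ ω : Fin n → Bool, h ω
      = ∑ ω ∈ Finset.univ.filter (fun ω => ω i = false), (h (up1 ω i) + h (up0 ω i)) := by
  rw [Finset.sum_add_distrib]
  have h0 : ∑ ω ∈ Finset.univ.filter (fun ω => ω i = false), h (up0 ω i)
      = ∑ ω ∈ Finset.univ.filter (fun ω => ω i = false), h ω := by
    refine Finset.sum_congr rfl fun ω hω => ?_
    have : ω i = false := (Finset.mem_filter.1 hω).2
    unfold up0
    rw [← this, Function.update_eq_self]
  have h1 : ∑ ω ∈ Finset.univ.filter (fun ω => ω i = false), h (up1 ω i)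
      = ∑ ω ∈ Finset.univ.filter (fun ω => ω i = true), h ω := by
    refine Finset.sum_nbij' (fun ω => up1 ω i) (fun ω => up0 ω i) ?_ ?_ ?_ ?_ ?_
    · intro ω hω; simp [up1]
    · intro ω hω; simp [up0]
    · intro ω hω
      have : ω i = false := by simpa using hω
      show Function.update (Function.update ω i true) i false = ω
      rw [Function.update_idem, ← this, Function.update_eq_self]
    · intro ω hω
      have : ω i = true := by simpa using hω
      show Function.update (Function.update ω i false) i true = ω
      rw [Function.update_idem, ← this, Function.update_eq_self]
    · intro ω hω; rfl
  rw [h0, h1]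
  have := Finset.sum_filter_add_sum_filter_not Finset.univ (fun ω : Fin n → Bool => ω i = true) h
  rw [← this]
  congr 1
  apply Finset.sum_congr _ (fun _ _ => rfl)
  congr 1
  ext ω
  simp

lemma piv_mem_update {n : ℕ} (f : (Fin n → Bool) → Bool) (ω : Fin n → Bool) (i : Fin n) (b : Bool) :
    (i ∈ pivSet f (Function.update ω i b)) ↔ i ∈ pivSet f ω := by
  unfold pivSet up1 up0
  simp only [Finset.mem_filter, Finset.mem_univ, true_and, Function.update_idem]

-- if pivotal then f(up1) = true and f(up0) = false
lemma piv_vals {n : ℕ} {f : (Fin n → Bool) → Bool} (hf : Mono f) {ω : Fin n → Bool} {i : Fin n}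
    (h : i ∈ pivSet f ω) : f (up1 ω i) = true ∧ f (up0 ω i) = false := by
  have hm := hf ω i
  have hne : f (up1 ω i) ≠ f (up0 ω i) := by
    unfold pivSet at h; simpa using h
  revert hm hne
  cases f (up1 ω i) <;> cases f (up0 ω i) <;> simp

lemma fval_diff {n : ℕ} {f : (Fin n → Bool) → Bool} (hf : Mono f) (ω : Fin n → Bool) (i : Fin n) :
    fval f (up1 ω i) - fval f (up0 ω i) = if i ∈ pivSet f ω then 1 else 0 := by
  have hmem : i ∈ pivSet f ω ↔ f (up1 ω i) ≠ f (up0 ω i) := by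
    unfold pivSet; simp
  unfold fval
  by_cases h : f (up1 ω i) = f (up0 ω i)
  · have hnp : ¬ (i ∈ pivSet f ω) := by rw [hmem]; simpa using h
    simp [hnp, h]
  · obtain ⟨h1, h0⟩ := piv_vals hf (hmem.2 h)
    simp [hmem.2 h, h1, h0]

lemma key_identity {n : ℕ} {p : ℝ} {f : (Fin n → Bool) → Bool} (hf : Mono f) (i : Fin n) :
    (∑ ω : Fin n → Bool, ((if ω i then (1:ℝ) else 0) - p) * fval f ω * W n p ω)
      = (1 - p) * Pr n p (fun ω => i ∈ pivSet f ω ∧ f ω = true) := by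
  unfold Pr
  rw [Finset.sum_filter]
  rw [sum_split i (fun ω => ((if ω i then (1:ℝ) else 0) - p) * fval f ω * W n p ω),
      sum_split i (fun ω => if i ∈ pivSet f ω ∧ f ω = true then W n p ω else 0)]
  rw [Finset.mul_sum]
  refine Finset.sum_congr rfl fun ω hω => ?_
  have hW1 : W n p (up1 ω i) = p * ∏ j ∈ Finset.univ.erase i, (if ω j then p else 1 - p) := by
    unfold up1; rw [W_update]; simp
  have hW0 : W n p (up0 ω i) = (1 - p) * ∏ j ∈ Finset.univ.erase i, (if ω j then p else 1 - p) := by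
    unfold up0; rw [W_update]; simp
  have hv1 : ((if (up1 ω i) i then (1:ℝ) else 0)) = 1 := by simp [up1]
  have hv0 : ((if (up0 ω i) i then (1:ℝ) else 0)) = 0 := by simp [up0]
  have hpm1 : (i ∈ pivSet f (up1 ω i)) ↔ i ∈ pivSet f ω := piv_mem_update f ω i true
  have hpm0 : (i ∈ pivSet f (up0 ω i)) ↔ i ∈ pivSet f ω := piv_mem_update f ω i false
  by_cases hpiv : i ∈ pivSet f ω
  · obtain ⟨ht, hfl⟩ := piv_vals hf hpiv
    simp only [hv1, hv0, hW1, hW0, fval, ht, hfl, hpm1, hpm0, hpiv, if_pos, if_true, and_true,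
      Bool.false_eq_true, and_false, if_false, true_and]
    ring
  · have he : f (up1 ω i) = f (up0 ω i) := by
      unfold pivSet at hpiv; simpa using hpiv
    simp only [hv1, hv0, hW1, hW0, fval, hpm1, hpm0, hpiv, false_and, if_false, he]
    cases hfb : f (up0 ω i) <;> simp <;> ring

lemma factorize {n : ℕ} (p : ℝ) (a : Fin n → ℝ) :
    ∑ ω : Fin n → Bool, Real.exp (∑ i, a i * ((if ω i then (1:ℝ) else 0) - p)) * W n p ω
      = ∏ i, (p * Real.exp (a i * (1 - p)) + (1 - p) * Real.exp (-(a i * p))) := by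
  have h : ∀ ω : Fin n → Bool, Real.exp (∑ i, a i * ((if ω i then (1:ℝ) else 0) - p)) * W n p ω
      = ∏ i, (Real.exp (a i * ((if ω i then (1:ℝ) else 0) - p)) * (if ω i then p else 1 - p)) := by
    intro ω
    rw [Real.exp_sum, W, ← Finset.prod_mul_distrib]
  simp_rw [h]
  rw [← Fintype.prod_sum (fun i (b : Bool) =>
    Real.exp (a i * ((if b then (1:ℝ) else 0) - p)) * (if b then p else 1 - p))]
  refine Finset.prod_congr rfl fun i _ => ?_
  rw [Fintype.sum_bool]
  norm_num
  ring_nf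

theorem stmt19 (n : ℕ) (p : ℝ) (hp0 : 0 < p) (hp1 : p < 1)
    (f : (Fin n → Bool) → Bool) (hf : Mono f)
    (hpos : 0 < Pr n p (fun ω => f ω = true)) :
    Pr n p (fun ω => f ω = true) ≤
      2 * Real.exp (-(1 / 2) *
        ∑ i : Fin n,
          ((1 - p) *
            (Pr n p (fun ω => i ∈ pivSet f ω ∧ f ω = true) /
              Pr n p (fun ω => f ω = true))) ^ 2) := by
  set q : ℝ := Pr n p (fun ω => f ω = true) with hq_def
  set a : Fin n → ℝ := fun i =>
    (1 - p) * (Pr n p (fun ω => i ∈ pivSet f ω ∧ f ω = true) / q) with ha_def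
  set M : ℝ := ∑ i, a i ^ 2 with hM_def
  have hWnn : ∀ ω : Fin n → Bool, 0 ≤ W n p ω := W_nonneg hp0.le hp1.le
  -- nonnegativity and boundedness of a
  have hPrnn : ∀ i, 0 ≤ Pr n p (fun ω => i ∈ pivSet f ω ∧ f ω = true) := fun i =>
    Finset.sum_nonneg fun ω _ => hWnn ω
  have hPrle : ∀ i, Pr n p (fun ω => i ∈ pivSet f ω ∧ f ω = true) ≤ q := by
    intro i
    apply Finset.sum_le_sum_of_subset_of_nonneg
    · intro ω hω
      simp only [Finset.mem_filter] at *
      exact ⟨hω.1, hω.2.2⟩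
    · intro ω _ _; exact hWnn ω
  have ha0 : ∀ i, 0 ≤ a i := fun i =>
    mul_nonneg (by linarith) (div_nonneg (hPrnn i) hpos.le)
  have ha1 : ∀ i, a i ≤ 1 := by
    intro i
    have h1 : Pr n p (fun ω => i ∈ pivSet f ω ∧ f ω = true) / q ≤ 1 :=
      (div_le_one hpos).2 (hPrle i)
    calc a i ≤ 1 * 1 := mul_le_mul (by linarith) h1 (div_nonneg (hPrnn i) hpos.le) (by norm_num)
    _ = 1 := by norm_num
  -- q as a full sum
  have hq_sum : ∑ ω : Fin n → Bool, fval f ω * W n p ω = q := by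
    rw [hq_def]; unfold Pr; rw [Finset.sum_filter]
    exact Finset.sum_congr rfl fun ω _ => by by_cases h : f ω <;> simp [fval, h]
  -- key identity restated
  have hkey : ∀ i, (∑ ω : Fin n → Bool, ((if ω i then (1:ℝ) else 0) - p) * fval f ω * W n p ω)
      = a i * q := by
    intro i
    rw [key_identity hf i, ha_def]
    field_simp
  -- the tilted sum against the event
  have hET : ∑ ω : Fin n → Bool,
      (∑ i, a i * ((if ω i then (1:ℝ) else 0) - p)) * (fval f ω * W n p ω) = M * q := by
    have swap : ∑ ω : Fin n → Bool,
        (∑ i, a i * ((if ω i then (1:ℝ) else 0) - p)) * (fval f ω * W n p ω)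
        = ∑ i, ∑ ω : Fin n → Bool,
            a i * (((if ω i then (1:ℝ) else 0) - p) * fval f ω * W n p ω) := by
      rw [Finset.sum_comm]
      refine Finset.sum_congr rfl fun ω _ => ?_
      rw [Finset.sum_mul]
      exact Finset.sum_congr rfl fun i _ => by ring
    rw [swap]
    rw [hM_def, Finset.sum_mul]
    refine Finset.sum_congr rfl fun i _ => ?_
    rw [← Finset.mul_sum, hkey i]
    ring
  -- tangent line trick : q * exp M ≤ ∑ fval * W * exp T
  have htan : q * Real.exp M ≤
      ∑ ω : Fin n → Bool, fval f ω * W n p ω *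
        Real.exp (∑ i, a i * ((if ω i then (1:ℝ) else 0) - p)) := by
    have hpt : ∀ ω : Fin n → Bool,
        Real.exp M * (fval f ω * W n p ω)
          + Real.exp M * ((∑ i, a i * ((if ω i then (1:ℝ) else 0) - p)) * (fval f ω * W n p ω))
          - (Real.exp M * M) * (fval f ω * W n p ω)
        ≤ fval f ω * W n p ω *
            Real.exp (∑ i, a i * ((if ω i then (1:ℝ) else 0) - p)) := by
      intro ω
      set T : ℝ := ∑ i, a i * ((if ω i then (1:ℝ) else 0) - p) with hT
      have hc : 0 ≤ fval f ω * W n p ω :=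
        mul_nonneg (by unfold fval; split <;> norm_num) (hWnn ω)
      have h1 : 1 + (T - M) ≤ Real.exp (T - M) := by linarith [Real.add_one_le_exp (T - M)]
      have h2 : Real.exp M * Real.exp (T - M) = Real.exp T := by
        rw [← Real.exp_add]; ring_nf
      nlinarith [mul_le_mul_of_nonneg_left h1 (mul_nonneg (Real.exp_pos M).le hc),
        Real.exp_pos M]
    calc q * Real.exp M
        = ∑ ω : Fin n → Bool,
            (Real.exp M * (fval f ω * W n p ω)
              + Real.exp M * ((∑ i, a i * ((if ω i then (1:ℝ) else 0) - p)) * (fval f ω * W n p ω))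
              - (Real.exp M * M) * (fval f ω * W n p ω)) := by
          simp only [Finset.sum_sub_distrib, Finset.sum_add_distrib, ← Finset.mul_sum]
          rw [hq_sum, hET]
          ring
      _ ≤ _ := Finset.sum_le_sum fun ω _ => hpt ω
  -- drop the indicator
  have hdrop : ∑ ω : Fin n → Bool, fval f ω * W n p ω *
        Real.exp (∑ i, a i * ((if ω i then (1:ℝ) else 0) - p))
      ≤ ∑ ω : Fin n → Bool,
          Real.exp (∑ i, a i * ((if ω i then (1:ℝ) else 0) - p)) * W n p ω := by
    refine Finset.sum_le_sum fun ω _ => ?_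
    have hfv : fval f ω ≤ 1 := by unfold fval; split <;> norm_num
    have hfv0 : 0 ≤ fval f ω := by unfold fval; split <;> norm_num
    nlinarith [hWnn ω, (Real.exp_pos (∑ i, a i * ((if ω i then (1:ℝ) else 0) - p))).le,
      mul_le_mul_of_nonneg_right hfv (mul_nonneg (hWnn ω)
        (Real.exp_pos (∑ i, a i * ((if ω i then (1:ℝ) else 0) - p))).le)]
  -- mgf bound
  have hmgf : ∑ ω : Fin n → Bool,
        Real.exp (∑ i, a i * ((if ω i then (1:ℝ) else 0) - p)) * W n p ω
      ≤ Real.exp (M / 2) := by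
    rw [factorize p a]
    have : Real.exp (M / 2) = ∏ i, Real.exp (a i ^ 2 / 2) := by
      rw [← Real.exp_sum, hM_def, ← Finset.sum_div]
    rw [this]
    refine Finset.prod_le_prod (fun i _ => ?_) (fun i _ => mgf_bound p (a i) hp0 hp1 (ha0 i) (ha1 i))
    have := Real.exp_pos (a i * (1 - p))
    have := Real.exp_pos (-(a i * p))
    nlinarith
  -- combine
  have hfinal : q * Real.exp M ≤ Real.exp (M / 2) := le_trans htan (le_trans hdrop hmgf)
  have hq_le : q ≤ Real.exp (-(1/2) * M) := by
    have : q ≤ Real.exp (M / 2 - M) := by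
      rw [Real.exp_sub, le_div_iff₀ (Real.exp_pos M)]
      exact hfinal
    have he : M / 2 - M = -(1/2) * M := by ring
    rwa [he] at this
  have hexp : 0 < Real.exp (-(1/2) * M) := Real.exp_pos _
  calc q ≤ Real.exp (-(1/2) * M) := hq_le
    _ ≤ 2 * Real.exp (-(1/2) * M) := by linarith
    _ = 2 * Real.exp (-(1/2) * ∑ i : Fin n, a i ^ 2) := by rw [← hM_def]
end
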